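/- (Theorem 1) Let p and q be probability distributions on a finite set of size n ≥ 2 with p_i, q_i > 0. Let Var_std = ∑_{i=1}^n p_i²/q_i − 1 be the variance under q of the standard importance weight p_i/q_i, and let Var_new = (1/(∑_j q_j²)²)·(∑_i p_i² q_i − (∑_i p_i q_i)²) be the variance under q of the group-expectation importance weight p_i/(∑_j q_j²). Then Var_std − Var_new ≥ exp(D_KL(p‖q)) − (n² + 1). -/

import Mathlib

/-- Theorem 1: `Var_std − Var_new ≥ exp(D_KL(p‖q)) − (n² + 1)`, where
`Var_std = ∑ p_i²/q_i − 1` and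
`Var_new = (1/(∑ q_j²)²)·(∑ p_i² q_i − (∑ p_i q_i)²)`. -/
theorem var_diff_ge_exp_KL_sub_const
    (n : ℕ) (hn : 2 ≤ n) (p q : Fin n → ℝ)
    (hp : ∀ i, 0 < p i) (hq : ∀ i, 0 < q i)
    (hps : ∑ i, p i = 1) (hqs : ∑ i, q i = 1) :
    ((∑ i, (p i) ^ 2 / q i) - 1)
      - (1 / (∑ j, (q j) ^ 2) ^ 2)
          * ((∑ i, (p i) ^ 2 * q i) - (∑ i, p i * q i) ^ 2)
      ≥ Real.exp (∑ i, p i * Real.log (p i / q i)) - ((n : ℝ) ^ 2 + 1) := by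
  set S : ℝ := ∑ j, (q j) ^ 2 with hS
  have hSpos : 0 < S := Finset.sum_pos (fun j _ => pow_pos (hq j) 2) ⟨⟨0, by omega⟩, Finset.mem_univ _⟩
  -- Cauchy-Schwarz: 1 = (∑ q)² ≤ n * S
  have hCS : (1 : ℝ) ≤ n * S := by
    have := sq_sum_le_card_mul_sum_sq (s := (Finset.univ : Finset (Fin n))) (f := q)
    simpa [hqs] using this
  -- Jensen: exp(KL) ≤ ∑ p_i²/q_i
  have hq1 : ∀ i, q i ≤ 1 := by
    intro i
    calc q i ≤ ∑ j, q j := Finset.single_le_sum (fun j _ => (hq j).le) (Finset.mem_univ i)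
    _ = 1 := hqs
  have hp1 : ∀ i, p i ≤ 1 := by
    intro i
    calc p i ≤ ∑ j, p j := Finset.single_le_sum (fun j _ => (hp j).le) (Finset.mem_univ i)
    _ = 1 := hps
  have hjensen : Real.exp (∑ i, p i * Real.log (p i / q i)) ≤ ∑ i, (p i) ^ 2 / q i := by
    have h := convexOn_exp.map_sum_le (t := Finset.univ) (w := p)
      (p := fun i => Real.log (p i / q i)) (fun i _ => (hp i).le) hps (fun i _ => trivial)
    simp only [smul_eq_mul] at h
    refine h.trans_eq (Finset.sum_congr rfl fun i _ => ?_)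
    rw [Real.exp_log (div_pos (hp i) (hq i))]
    field_simp
  -- numerator bound
  have hnum : (∑ i, (p i) ^ 2 * q i) - (∑ i, p i * q i) ^ 2 ≤ 1 := by
    have h1 : (∑ i, (p i) ^ 2 * q i) ≤ ∑ i, p i := by
      apply Finset.sum_le_sum
      intro i _
      calc (p i) ^ 2 * q i ≤ p i * 1 := by nlinarith [hp i, hq i, hp1 i, hq1 i]
      _ = p i := mul_one _
    nlinarith [sq_nonneg (∑ i, p i * q i)]
  have hVarnew : (1 / S ^ 2) * ((∑ i, (p i) ^ 2 * q i) - (∑ i, p i * q i) ^ 2) ≤ (n : ℝ) ^ 2 := by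
    rcases le_or_gt ((∑ i, (p i) ^ 2 * q i) - (∑ i, p i * q i) ^ 2) 0 with h | h
    · have : (1 / S ^ 2) * ((∑ i, (p i) ^ 2 * q i) - (∑ i, p i * q i) ^ 2) ≤ 0 :=
        mul_nonpos_of_nonneg_of_nonpos (by positivity) h
      have hn2 : (0:ℝ) ≤ (n:ℝ)^2 := by positivity
      linarith
    · have hinv : 1 / S ^ 2 ≤ (n : ℝ) ^ 2 := by
        rw [div_le_iff₀ (by positivity)]
        nlinarith [hSpos, hCS]
      calc (1 / S ^ 2) * ((∑ i, (p i) ^ 2 * q i) - (∑ i, p i * q i) ^ 2)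
          ≤ (n : ℝ) ^ 2 * 1 := by
            apply mul_le_mul hinv hnum h.le (by positivity)
      _ = (n : ℝ) ^ 2 := mul_one _
  linarith
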